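/- Let B be a C*-algebra, I a closed ideal of B, and x ∈ I. Then the distance from x to a closed ideal K of B equals the distance from x to I ∩ K, i.e. inf_{y ∈ K} ‖x − y‖ = inf_{z ∈ I ∩ K} ‖x − z‖. -/

import Mathlib

open Unitization Metric CStarAlgebra

namespace AuxCStarIdeal

variable {B : Type*} [NonUnitalCStarAlgebra B]

lemma core_approx (y : B) {ε : ℝ} (hε : 0 < ε) :
    ∃ e : B, (∃ c : ℂ, ∃ b : B, e = c • (star y * y) + (star y * y) * b) ∧
      ∀ x : B, ‖x - x * e‖ ≤ ‖x - y‖ + ε := by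
  have hδ0 : 0 < ε ^ 2 := by positivity
  set δ : ℝ := ε ^ 2 with hδ
  set a : B := star y * y with ha
  set a' : B⁺¹ := (a : B⁺¹) with ha'
  have ha'' : a' = star (y : B⁺¹) * (y : B⁺¹) := by simp [ha', ha]
  have hσ : ∀ t ∈ spectrum ℝ a', 0 ≤ t := ha'' ▸ spectrum_star_mul_self_nonneg
  have hsa : IsSelfAdjoint a' := ha'' ▸ IsSelfAdjoint.star_mul_self _
  have hne : ∀ t : ℝ, |t| + δ ≠ 0 := fun t => by positivity
  set h : ℝ → ℝ := fun t => (|t| + δ)⁻¹ with hh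
  have hcont : Continuous h := Continuous.inv₀ (by fun_prop) hne
  set w : B⁺¹ := cfc h a' with hw
  refine ⟨w.fst • a + a * w.snd, ⟨w.fst, w.snd, rfl⟩, fun x => ?_⟩
  have key : ((w.fst • a + a * w.snd : B) : B⁺¹) = a' * w := by
    refine Unitization.ext ?_ ?_ <;> simp [ha']
  have hid : ContinuousOn (fun t : ℝ => t) (spectrum ℝ a') := by fun_prop
  have hgc : ContinuousOn (fun t : ℝ => t * h t) (spectrum ℝ a') :=
    (continuous_id.mul hcont).continuousOn
  have haw : a' * w = cfc (fun t => t * h t) a' := by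
    rw [hw, cfc_mul _ _ a' hid hcont.continuousOn, cfc_id' ℝ a']
  set u : B⁺¹ := 1 - a' * w with hu
  have hu' : u = cfc (fun t => 1 - t * h t) a' := by
    have h1 := cfc_sub (fun _ : ℝ => 1) (fun t => t * h t) a' continuousOn_const hgc
    rw [cfc_const_one ℝ a'] at h1
    rw [hu, haw, ← h1]
  have hsu : IsSelfAdjoint u := hu' ▸ cfc_predicate _ a'
  -- bounds on the spectrum
  have hb1 : ∀ t ∈ spectrum ℝ a', ‖1 - t * h t‖ ≤ 1 := by
    intro t ht
    have ht' := hσ t ht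
    have h1 : 0 < |t| + δ := by positivity
    have h2 : t * h t = t / (|t| + δ) := by rw [hh]; ring
    rw [Real.norm_eq_abs, h2, abs_le]
    rw [abs_of_nonneg ht'] at h1 ⊢
    constructor
    · have : t / (t + δ) ≤ 1 := by
        rw [div_le_one h1]; linarith
      linarith
    · have : 0 ≤ t / (t + δ) := by positivity
      linarith
  have hnu : ‖u‖ ≤ 1 := hu' ▸ norm_cfc_le zero_le_one hb1
  have hc1 : ContinuousOn (fun t : ℝ => 1 - t * h t) (spectrum ℝ a') :=
    (continuous_const.sub (continuous_id.mul hcont)).continuousOn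
  have hua : ‖u * a'‖ ≤ δ := by
    have heq : u * a' = cfc (fun t => (1 - t * h t) * t) a' := by
      rw [cfc_mul _ _ a' hc1 hid, cfc_id' ℝ a', ← hu']
    rw [heq]
    refine norm_cfc_le hδ0.le fun t ht => ?_
    have ht' := hσ t ht
    have h1 : 0 < |t| + δ := by positivity
    rw [abs_of_nonneg ht'] at h1
    have h2 : (1 - t * h t) * t = δ * t / (t + δ) := by
      simp only [hh, abs_of_nonneg ht']
      field_simp
      ring
    rw [Real.norm_eq_abs, h2, abs_of_nonneg (by positivity)]
    rw [div_le_iff₀ h1]; nlinarith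
  -- the key estimate ‖y' * u‖ ≤ ε
  have hyu : ‖(y : B⁺¹) * u‖ ≤ ε := by
    have hsq : ‖(y : B⁺¹) * u‖ * ‖(y : B⁺¹) * u‖ = ‖u * a' * u‖ := by
      rw [← CStarRing.norm_star_mul_self]
      congr 1
      rw [star_mul, hsu.star_eq, ha'']
      noncomm_ring
    have : ‖u * a' * u‖ ≤ δ := by
      calc ‖u * a' * u‖ ≤ ‖u * a'‖ * ‖u‖ := norm_mul_le _ _
        _ ≤ δ * 1 := mul_le_mul hua hnu (norm_nonneg _) hδ0.le
        _ = δ := mul_one _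
    nlinarith [norm_nonneg ((y : B⁺¹) * u)]
  -- conclude
  rw [← Unitization.norm_inr (𝕜 := ℂ), ← Unitization.norm_inr (𝕜 := ℂ) (x - y),
    Unitization.inr_sub ℂ, Unitization.inr_sub ℂ, Unitization.inr_mul, key]
  have hxu : (x : B⁺¹) - (x : B⁺¹) * (a' * w) = ((x : B⁺¹) - (y : B⁺¹)) * u + (y : B⁺¹) * u := by
    rw [hu]; noncomm_ring
  rw [hxu]
  calc ‖((x : B⁺¹) - (y : B⁺¹)) * u + (y : B⁺¹) * u‖
      ≤ ‖((x : B⁺¹) - (y : B⁺¹)) * u‖ + ‖(y : B⁺¹) * u‖ := norm_add_le _ _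
    _ ≤ ‖(x : B⁺¹) - (y : B⁺¹)‖ * ‖u‖ + ε := add_le_add (norm_mul_le _ _) hyu
    _ ≤ ‖(x : B⁺¹) - (y : B⁺¹)‖ * 1 + ε := by gcongr
    _ = ‖(x : B⁺¹) - (y : B⁺¹)‖ + ε := by ring

lemma smul_mem_of_isClosed (K : TwoSidedIdeal B) (hK : IsClosed (K : Set B)) (c : ℂ) {y : B}
    (hy : y ∈ K) : c • y ∈ K := by
  have seq : ∀ n : ℕ, ∃ z : B, z ∈ K ∧ ‖c • y - z‖ ≤ ‖c‖ * (1 / (n + 1)) := by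
    intro n
    obtain ⟨e, -, hest⟩ := core_approx y (ε := 1 / (n + 1)) (by positivity)
    refine ⟨y * (c • e), K.mul_mem_right _ _ hy, ?_⟩
    have h1 := hest y
    rw [sub_self, norm_zero, zero_add] at h1
    calc ‖c • y - y * (c • e)‖ = ‖c • (y - y * e)‖ := by rw [smul_sub, mul_smul_comm]
      _ = ‖c‖ * ‖y - y * e‖ := norm_smul _ _
      _ ≤ ‖c‖ * (1 / (n + 1)) := mul_le_mul_of_nonneg_left h1 (norm_nonneg c)
  choose z hzK hz using seq
  have htend : Filter.Tendsto z Filter.atTop (nhds (c • y)) := by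
    rw [tendsto_iff_norm_sub_tendsto_zero]
    have hlim : Filter.Tendsto (fun n : ℕ => ‖c‖ * (1 / (n + 1))) Filter.atTop (nhds 0) := by
      have := tendsto_one_div_add_atTop_nhds_zero_nat.const_mul ‖c‖
      simpa using this
    refine squeeze_zero_norm (fun n => ?_) hlim
    rw [norm_norm, ← norm_neg, neg_sub]; exact hz n
  exact hK.mem_of_tendsto htend (Filter.Eventually.of_forall fun n => hzK n)

end AuxCStarIdeal

/-- If `I` and `K` are closed ideals of a C*-algebra `B` and `x ∈ I`, then the distance
from `x` to `K` equals the distance from `x` to `I ∩ K`. -/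
theorem infDist_eq_infDist_inter {B : Type*} [NonUnitalCStarAlgebra B]
    (I K : TwoSidedIdeal B) (hI : IsClosed (I : Set B)) (hK : IsClosed (K : Set B))
    (x : B) (hx : x ∈ I) :
    Metric.infDist x (K : Set B) = Metric.infDist x ((I : Set B) ∩ (K : Set B)) := by
  have hKne : (K : Set B).Nonempty := ⟨0, K.zero_mem⟩
  have hIKne : ((I : Set B) ∩ (K : Set B)).Nonempty := ⟨0, I.zero_mem, K.zero_mem⟩
  refine le_antisymm (Metric.infDist_le_infDist_of_subset Set.inter_subset_right hIKne) ?_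
  refine le_of_forall_pos_le_add fun ε hε => ?_
  have hε2 : 0 < ε / 2 := by positivity
  obtain ⟨y, hyK, hy⟩ := (Metric.infDist_lt_iff hKne).mp
    (lt_add_of_pos_right (Metric.infDist x (K : Set B)) hε2)
  obtain ⟨e, ⟨c, b, hce⟩, hest⟩ := AuxCStarIdeal.core_approx y hε2
  have heK : e ∈ K := by
    rw [hce]
    have h1 : star y * y ∈ K := K.mul_mem_left _ _ hyK
    exact add_mem (AuxCStarIdeal.smul_mem_of_isClosed K hK c h1) (K.mul_mem_right _ _ h1)
  have hmem : x * e ∈ (I : Set B) ∩ (K : Set B) :=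
    ⟨I.mul_mem_right _ _ hx, K.mul_mem_left _ _ heK⟩
  calc Metric.infDist x ((I : Set B) ∩ (K : Set B)) ≤ dist x (x * e) :=
        Metric.infDist_le_dist_of_mem hmem
    _ = ‖x - x * e‖ := dist_eq_norm _ _
    _ ≤ ‖x - y‖ + ε / 2 := hest x
    _ = dist x y + ε / 2 := by rw [dist_eq_norm]
    _ ≤ Metric.infDist x (K : Set B) + ε / 2 + ε / 2 := by linarith [hy.le]
    _ = Metric.infDist x (K : Set B) + ε := by ring
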